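/- Let M ∈ ℝ^{J×I}, N ∈ ℝ^{I×J} with M·N = id_{ℝ^J}, A^S, A^F ∈ ℝ^{I×I} with M·A^F = 0 and kernel(A^F) = range(N). If c : [0,T] → ℝ^I is continuously differentiable and satisfies M·ċ(t) = M·A^S·c(t) and A^F·c(t) = 0 for all t, then ĉ(t) := M·c(t) satisfies the coarse-grained ODE dĉ/dt = (M·A^S·N)·ĉ, and conversely c(t) = N·ĉ(t). -/

import Mathlib

open Matrix

theorem coarse_grained_ODE {I J : ℕ}
    (M : Matrix (Fin J) (Fin I) ℝ) (N : Matrix (Fin I) (Fin J) ℝ)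
    (hMN : M * N = 1)
    (AS AF : Matrix (Fin I) (Fin I) ℝ)
    (hMAF : M * AF = 0)
    (hker : LinearMap.ker (Matrix.toLin' AF) = LinearMap.range (Matrix.toLin' N))
    (T : ℝ) (hT : 0 < T)
    (c c' : ℝ → Fin I → ℝ)
    (hderiv : ∀ t ∈ Set.Icc 0 T, HasDerivAt c (c' t) t)
    (hODE : ∀ t ∈ Set.Icc 0 T, M.mulVec (c' t) = M.mulVec (AS.mulVec (c t)))
    (hfast : ∀ t ∈ Set.Icc 0 T, AF.mulVec (c t) = 0) :
    (∀ t ∈ Set.Icc 0 T,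
        HasDerivAt (fun s => M.mulVec (c s))
          ((M * AS * N).mulVec (M.mulVec (c t))) t) ∧
    (∀ t ∈ Set.Icc 0 T, c t = N.mulVec (M.mulVec (c t))) := by
  have hrec : ∀ t ∈ Set.Icc 0 T, c t = N.mulVec (M.mulVec (c t)) := by
    intro t ht
    have hmem : c t ∈ LinearMap.ker (Matrix.toLin' AF) := by
      simp [Matrix.toLin'_apply, hfast t ht]
    rw [hker] at hmem
    obtain ⟨x, hx⟩ := hmem
    rw [Matrix.toLin'_apply] at hx
    rw [← hx, Matrix.mulVec_mulVec, Matrix.mulVec_mulVec, Matrix.mul_assoc, hMN,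
      Matrix.mul_one]
  refine ⟨fun t ht => ?_, hrec⟩
  have L : (Fin I → ℝ) →L[ℝ] (Fin J → ℝ) :=
    LinearMap.toContinuousLinearMap (Matrix.mulVecLin M)
  have h1 : HasDerivAt (fun s => M.mulVec (c s)) (M.mulVec (c' t)) t := by
    have := (LinearMap.toContinuousLinearMap
      (Matrix.mulVecLin M)).hasFDerivAt.comp_hasDerivAt t (hderiv t ht)
    simpa [Function.comp_def] using this
  have h2 : M.mulVec (c' t) = (M * AS * N).mulVec (M.mulVec (c t)) := by
    rw [hODE t ht]
    conv_lhs => rw [hrec t ht]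
    rw [Matrix.mulVec_mulVec, Matrix.mulVec_mulVec, Matrix.mulVec_mulVec]
  rwa [h2] at h1
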